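/- arXiv:1903.07346 — 3 statements merged into one kernel-verified Lean document; each statement's English description precedes it below -/
import Mathlib

section
/- For m ≥ 2 and k ≥ 0, the interpolated multiple zeta value satisfies ζ^t({m}_k) = ∑_{j=0}^{k} t^j ζ*({m}_j) (1-t)^{k-j} ζ({m}_{k-j}), where ζ({m}_j) = ∑_{ℓ_1 > ... > ℓ_j ≥ 1} 1/(ℓ_1···ℓ_j)^m and ζ*({m}_j) is the analogous sum over weakly decreasing indices, and ζ^t({m}_k) = ∑_{ℓ_1 ≥ ... ≥ ℓ_k ≥ 1} t^{σ(ℓ)}/(ℓ_1···ℓ_k)^m. -/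
/-- The number of adjacent equalities `ℓ_j = ℓ_{j+1}` in a tuple. -/
def sigmaEq {k : ℕ} (ℓ : Fin k → ℕ) : ℕ :=
  (Finset.univ.filter fun p : Fin k × Fin k =>
    (p.2 : ℕ) = (p.1 : ℕ) + 1 ∧ ℓ p.1 = ℓ p.2).card

/-- Multiple zeta value ζ({m}_j): sum over strictly decreasing j-tuples of positive integers. -/
noncomputable def zetaConst (m j : ℕ) : ℝ :=
  ∑' ℓ : {ℓ : Fin j → ℕ // (∀ i, 1 ≤ ℓ i) ∧ ∀ a b : Fin j, a < b → ℓ b < ℓ a},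
    ∏ i, (1 : ℝ) / ((ℓ : Fin j → ℕ) i : ℝ) ^ m

/-- Multiple zeta star value ζ*({m}_j): sum over weakly decreasing j-tuples. -/
noncomputable def zetaStarConst (m j : ℕ) : ℝ :=
  ∑' ℓ : {ℓ : Fin j → ℕ // (∀ i, 1 ≤ ℓ i) ∧ ∀ a b : Fin j, a ≤ b → ℓ b ≤ ℓ a},
    ∏ i, (1 : ℝ) / ((ℓ : Fin j → ℕ) i : ℝ) ^ m

/-- Interpolated multiple zeta value ζ^t({m}_k). -/
noncomputable def zetaInterpConst (t : ℝ) (m k : ℕ) : ℝ :=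
  ∑' ℓ : {ℓ : Fin k → ℕ // (∀ i, 1 ≤ ℓ i) ∧ ∀ a b : Fin k, a ≤ b → ℓ b ≤ ℓ a},
    t ^ sigmaEq (ℓ : Fin k → ℕ) * ∏ i, (1 : ℝ) / ((ℓ : Fin k → ℕ) i : ℝ) ^ m


open Finset

namespace IZD

noncomputable def uu (m n : ℕ) : ℝ := (1:ℝ) / (n:ℝ) ^ m

lemma uu_nonneg (m n : ℕ) : 0 ≤ uu m n := by unfold uu; positivity

lemma summable_uu {m : ℕ} (hm : 2 ≤ m) : Summable (uu m) := by
  unfold uu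
  rw [Real.summable_one_div_nat_pow]
  omega

lemma summable_pi {m : ℕ} (hm : 2 ≤ m) (k : ℕ) :
    Summable (fun ℓ : Fin k → ℕ => ∏ i, uu m (ℓ i)) := by
  induction k with
  | zero =>
    simp only [Finset.univ_eq_empty, Finset.prod_empty]
    exact summable_of_ne_finset_zero (s := Finset.univ) (fun b hb => absurd (Finset.mem_univ b) hb)
  | succ n ih =>
    have h := ((summable_uu hm).mul_of_nonneg ih (fun n => uu_nonneg m n)
      (fun ℓ => Finset.prod_nonneg fun i _ => uu_nonneg m _))
    rw [← Equiv.summable_iff (Fin.consEquiv (fun _ : Fin (n + 1) => ℕ)).symm] at h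
    apply h.congr
    intro ℓ
    simp [Fin.consEquiv, Fin.prod_univ_succ, Fin.tail]

abbrev WD (k : ℕ) := {ℓ : Fin k → ℕ // (∀ i, 1 ≤ ℓ i) ∧ ∀ a b : Fin k, a ≤ b → ℓ b ≤ ℓ a}
abbrev SD (j : ℕ) := {ℓ : Fin j → ℕ // (∀ i, 1 ≤ ℓ i) ∧ ∀ a b : Fin j, a < b → ℓ b < ℓ a}
abbrev MS (k : ℕ) := {M : Multiset ℕ // Multiset.card M = k ∧ ∀ n ∈ M, 1 ≤ n}
abbrev FS (j : ℕ) := {S : Finset ℕ // S.card = j ∧ ∀ n ∈ S, 1 ≤ n}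

lemma sorted_ge_ofFn {k : ℕ} {ℓ : Fin k → ℕ} (h : ∀ a b : Fin k, a ≤ b → ℓ b ≤ ℓ a) :
    (List.ofFn ℓ).Pairwise (· ≥ ·) := by
  rw [List.pairwise_iff_get]
  intro i j hij
  rw [List.get_ofFn, List.get_ofFn]
  apply h
  rw [Fin.le_def]
  simpa [Fin.lt_def] using le_of_lt hij

lemma wd_unique {k : ℕ} {ℓ ℓ' : Fin k → ℕ} (h : ∀ a b : Fin k, a ≤ b → ℓ b ≤ ℓ a)
    (h' : ∀ a b : Fin k, a ≤ b → ℓ' b ≤ ℓ' a)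
    (hM : (List.ofFn ℓ : Multiset ℕ) = (List.ofFn ℓ' : Multiset ℕ)) : ℓ = ℓ' := by
  have hp : (List.ofFn ℓ).Perm (List.ofFn ℓ') := Quotient.exact hM
  have he := List.Perm.eq_of_pairwise' (sorted_ge_ofFn h) (sorted_ge_ofFn h') hp
  exact List.ofFn_inj.mp he

noncomputable def msTuple (k : ℕ) (M : Multiset ℕ) (h : Multiset.card M = k) : Fin k → ℕ :=
  fun i => (M.sort (· ≤ ·)).get (Fin.cast (by rw [Multiset.length_sort, h]) i.rev)

lemma msTuple_anti (k : ℕ) (M : Multiset ℕ) (h : Multiset.card M = k) :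
    ∀ a b : Fin k, a ≤ b → msTuple k M h b ≤ msTuple k M h a := by
  intro a b hab
  apply (Multiset.pairwise_sort M (· ≤ ·)).rel_get_of_le
  change (Fin.cast _ b.rev) ≤ (Fin.cast _ a.rev)
  rw [Fin.le_def]
  simp only [Fin.coe_cast, Fin.val_rev]
  omega

lemma msTuple_mem (k : ℕ) (M : Multiset ℕ) (h : Multiset.card M = k) (i : Fin k) :
    msTuple k M h i ∈ M := by
  rw [msTuple, ← Multiset.mem_sort (· ≤ ·)]
  exact List.get_mem _ _

lemma ofFn_msTuple (k : ℕ) (M : Multiset ℕ) (h : Multiset.card M = k) :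
    (List.ofFn (msTuple k M h) : Multiset ℕ) = M := by
  have hlen : (M.sort (· ≤ ·)).length = k := by rw [Multiset.length_sort, h]
  have : List.ofFn (msTuple k M h) = (M.sort (· ≤ ·)).reverse := by
    apply List.ext_get
    · simp [hlen]
    · intro n h1 h2
      rw [List.get_ofFn, msTuple]
      rw [List.get_reverse']
      · congr 1
        apply Fin.ext
        simp only [Fin.coe_cast, Fin.val_rev]
        simp only [List.length_ofFn] at h1
        omega
      · simp only [List.length_reverse] at h2
        omega
  rw [this, Multiset.coe_reverse, Multiset.sort_eq]

noncomputable def eWD (k : ℕ) : WD k ≃ MS k where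
  toFun ℓ := ⟨(List.ofFn ℓ.1 : Multiset ℕ), by simp, by
    intro n hn
    rw [Multiset.mem_coe, List.mem_ofFn] at hn
    obtain ⟨i, rfl⟩ := hn
    exact ℓ.2.1 i⟩
  invFun M := ⟨msTuple k M.1 M.2.1, fun i => M.2.2 _ (msTuple_mem k M.1 M.2.1 i),
    msTuple_anti k M.1 M.2.1⟩
  left_inv := fun ℓ => by
    apply Subtype.ext
    dsimp only
    exact wd_unique (msTuple_anti k _ _) ℓ.2.2 (ofFn_msTuple k _ _)
  right_inv := fun M => by
    apply Subtype.ext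
    dsimp only
    exact ofFn_msTuple k M.1 M.2.1

lemma sd_inj {j : ℕ} {ℓ : Fin j → ℕ} (h : ∀ a b : Fin j, a < b → ℓ b < ℓ a) :
    Function.Injective ℓ := by
  intro a b hab
  rcases lt_trichotomy a b with h1 | h1 | h1
  · exact absurd hab (ne_of_gt (h a b h1))
  · exact h1
  · exact absurd hab (ne_of_lt (h b a h1))

lemma sd_wd {j : ℕ} {ℓ : Fin j → ℕ} (h : ∀ a b : Fin j, a < b → ℓ b < ℓ a) :
    ∀ a b : Fin j, a ≤ b → ℓ b ≤ ℓ a := by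
  intro a b hab
  rcases eq_or_lt_of_le hab with rfl | h1
  · exact le_rfl
  · exact le_of_lt (h a b h1)

lemma sd_unique {j : ℕ} {ℓ ℓ' : Fin j → ℕ} (h : ∀ a b : Fin j, a < b → ℓ b < ℓ a)
    (h' : ∀ a b : Fin j, a < b → ℓ' b < ℓ' a)
    (hI : Finset.image ℓ Finset.univ = Finset.image ℓ' Finset.univ) : ℓ = ℓ' := by
  apply wd_unique (sd_wd h) (sd_wd h')
  rw [Multiset.Nodup.ext (by rw [Multiset.coe_nodup, List.nodup_ofFn]; exact sd_inj h)
    (by rw [Multiset.coe_nodup, List.nodup_ofFn]; exact sd_inj h')]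
  intro a
  rw [Multiset.mem_coe, Multiset.mem_coe, List.mem_ofFn, List.mem_ofFn]
  have := Finset.ext_iff.mp hI a
  simpa [Set.mem_range, eq_comm] using this

noncomputable def fsTuple (j : ℕ) (S : Finset ℕ) (h : S.card = j) : Fin j → ℕ :=
  fun i => (S.orderIsoOfFin h i.rev : ℕ)

lemma fsTuple_anti (j : ℕ) (S : Finset ℕ) (h : S.card = j) :
    ∀ a b : Fin j, a < b → fsTuple j S h b < fsTuple j S h a := by
  intro a b hab
  have h2 : b.rev < a.rev := by rwa [Fin.rev_lt_rev]
  have h3 := (S.orderIsoOfFin h).strictMono h2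
  exact h3

lemma fsTuple_mem (j : ℕ) (S : Finset ℕ) (h : S.card = j) (i : Fin j) :
    fsTuple j S h i ∈ S := Finset.coe_mem _

lemma image_fsTuple (j : ℕ) (S : Finset ℕ) (h : S.card = j) :
    Finset.image (fsTuple j S h) Finset.univ = S := by
  apply Finset.ext
  intro n
  simp only [Finset.mem_image, Finset.mem_univ, true_and]
  constructor
  · rintro ⟨i, rfl⟩
    exact Finset.coe_mem _
  · intro hn
    refine ⟨((S.orderIsoOfFin h).symm ⟨n, hn⟩).rev, ?_⟩
    rw [fsTuple, Fin.rev_rev]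
    simp

noncomputable def eSD (j : ℕ) : SD j ≃ FS j where
  toFun ℓ := ⟨Finset.image ℓ.1 Finset.univ, by
      rw [Finset.card_image_of_injective _ (sd_inj ℓ.2.2), Finset.card_univ, Fintype.card_fin], by
    intro n hn
    rw [Finset.mem_image] at hn
    obtain ⟨i, _, rfl⟩ := hn
    exact ℓ.2.1 i⟩
  invFun S := ⟨fsTuple j S.1 S.2.1, fun i => S.2.2 _ (fsTuple_mem j S.1 S.2.1 i),
    fsTuple_anti j S.1 S.2.1⟩
  left_inv := fun ℓ => by
    apply Subtype.ext
    dsimp only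
    apply sd_unique (fsTuple_anti j _ _) ℓ.2.2
    rw [image_fsTuple]
  right_inv := fun S => by
    apply Subtype.ext
    dsimp only
    exact image_fsTuple j S.1 S.2.1

lemma sigmaEq_zero (ℓ : Fin 0 → ℕ) : sigmaEq ℓ = 0 := by
  simp [sigmaEq]

lemma aux_pair {k : ℕ} (ℓ : Fin (k + 1) → ℕ) (p : Fin (k + 1) × Fin (k + 1))
    (hlt : (p.1 : ℕ) < k) (hp2 : (p.2 : ℕ) = (p.1 : ℕ) + 1) (hv : ℓ p.1 = ℓ p.2) :
    ℓ (Fin.castSucc ⟨(p.1 : ℕ), hlt⟩) = ℓ (Fin.succ ⟨(p.1 : ℕ), hlt⟩) := by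
  have e1 : Fin.castSucc ⟨(p.1 : ℕ), hlt⟩ = p.1 := Fin.ext (by simp)
  have e2 : Fin.succ ⟨(p.1 : ℕ), hlt⟩ = p.2 := Fin.ext (by simp [hp2])
  rw [e1, e2]
  exact hv

lemma sigmaEq_succ {k : ℕ} (ℓ : Fin (k + 1) → ℕ) :
    sigmaEq ℓ = (Finset.univ.filter fun i : Fin k => ℓ i.castSucc = ℓ i.succ).card := by
  unfold sigmaEq
  apply Finset.card_bij (fun (p : Fin (k+1) × Fin (k+1)) hp =>
    (⟨(p.1 : ℕ), by
      simp only [Finset.mem_filter] at hp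
      have := p.2.isLt
      omega⟩ : Fin k))
  · intro p hp
    simp only [Finset.mem_filter, Finset.mem_univ, true_and] at hp ⊢
    exact aux_pair ℓ p _ hp.1 hp.2
  · intro p1 hp1 p2 hp2 he
    simp only [Finset.mem_filter, Finset.mem_univ, true_and] at hp1 hp2
    have hv : (p1.1 : ℕ) = (p2.1 : ℕ) := by
      simpa using congrArg Fin.val he
    apply Prod.ext
    · exact Fin.ext hv
    · apply Fin.ext; omega
  · intro b hb
    simp only [Finset.mem_filter, Finset.mem_univ, true_and] at hb
    refine ⟨(b.castSucc, b.succ), ?_, ?_⟩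
    · simp only [Finset.mem_filter, Finset.mem_univ, true_and]
      exact ⟨by simp, hb⟩
    · apply Fin.ext; simp

lemma sigma_add_card : ∀ (k : ℕ) (ℓ : Fin k → ℕ),
    (∀ a b : Fin k, a ≤ b → ℓ b ≤ ℓ a) →
    sigmaEq ℓ + (Finset.image ℓ Finset.univ).card = k := by
  intro k
  induction k with
  | zero => intro ℓ _; simp [sigmaEq_zero]
  | succ n ih =>
    intro ℓ h
    rw [sigmaEq_succ]
    cases n with
    | zero =>
      simp only [Finset.univ_eq_empty, Finset.filter_empty, Finset.card_empty]
      rw [show (Finset.univ : Finset (Fin 1)) = {0} from rfl]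
      simp
    | succ n' =>
      set tl : Fin (n' + 1) → ℕ := fun i => ℓ i.succ with htl_def
      have htl : ∀ a b : Fin (n' + 1), a ≤ b → tl b ≤ tl a :=
        fun a b hab => h _ _ (by rwa [Fin.succ_le_succ_iff])
      have IH := ih tl htl
      rw [sigmaEq_succ] at IH
      have himg : Finset.image ℓ Finset.univ = insert (ℓ 0) (Finset.image tl Finset.univ) := by
        ext x
        simp only [Finset.mem_image, Finset.mem_univ, true_and, Finset.mem_insert, htl_def]
        rw [Fin.exists_fin_succ]
        tauto
      have hsum : (Finset.univ.filter fun i : Fin (n' + 1) => ℓ i.castSucc = ℓ i.succ).card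
          = ((if ℓ 0 = ℓ (Fin.succ 0) then 1 else 0)
            + (Finset.univ.filter fun i : Fin n' => tl i.castSucc = tl i.succ).card) := by
        rw [Finset.card_filter, Fin.sum_univ_succ, Finset.card_filter]
        congr 1
      have hmem : ℓ 0 ∈ Finset.image tl Finset.univ ↔ ℓ 0 = ℓ (Fin.succ 0) := by
        constructor
        · intro hx
          simp only [Finset.mem_image, Finset.mem_univ, true_and, htl_def] at hx
          obtain ⟨j, hj⟩ := hx
          have h1 : ℓ j.succ ≤ ℓ (Fin.succ 0) := h _ _ (by rw [Fin.succ_le_succ_iff]; exact Fin.zero_le j)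
          have h2 : ℓ (Fin.succ 0) ≤ ℓ 0 := h _ _ (Fin.zero_le _)
          omega
        · intro he
          simp only [Finset.mem_image, Finset.mem_univ, true_and, htl_def]
          exact ⟨0, he.symm⟩
      by_cases h01 : ℓ 0 = ℓ (Fin.succ 0)
      · rw [hsum, himg, if_pos h01, Finset.card_insert_of_mem (hmem.2 h01)]
        omega
      · rw [hsum, himg, if_neg h01, Finset.card_insert_of_notMem (fun hx => h01 (hmem.1 hx))]
        omega

noncomputable def gg (m : ℕ) (M : Multiset ℕ) : ℝ := (M.map (uu m)).prod

lemma gg_nonneg (m : ℕ) (M : Multiset ℕ) : 0 ≤ gg m M := by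
  apply Multiset.prod_nonneg
  intro a ha
  rw [Multiset.mem_map] at ha
  obtain ⟨n, _, rfl⟩ := ha
  exact uu_nonneg m n

lemma gg_add (m : ℕ) (A B : Multiset ℕ) : gg m (A + B) = gg m A * gg m B := by
  simp [gg]

lemma gg_ofFn (m k : ℕ) (ℓ : Fin k → ℕ) :
    gg m (List.ofFn ℓ : Multiset ℕ) = ∏ i, uu m (ℓ i) := by
  simp [gg, List.map_ofFn, List.prod_ofFn, Function.comp]

lemma gg_finset (m : ℕ) (S : Finset ℕ) : gg m S.val = ∏ n ∈ S, uu m n := rfl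

lemma zetaStar_eq (m j : ℕ) : zetaStarConst m j = ∑' M : MS j, gg m M.1 := by
  rw [zetaStarConst, ← Equiv.tsum_eq (eWD j) (fun M : MS j => gg m M.1)]
  apply tsum_congr
  intro ℓ
  rw [show ((eWD j) ℓ).1 = (List.ofFn ℓ.1 : Multiset ℕ) from rfl, gg_ofFn]
  apply Finset.prod_congr rfl
  intro i _
  rw [uu]

lemma zeta_eq (m j : ℕ) : zetaConst m j = ∑' S : FS j, gg m S.1.val := by
  rw [zetaConst, ← Equiv.tsum_eq (eSD j) (fun S : FS j => gg m S.1.val)]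
  apply tsum_congr
  intro ℓ
  rw [show ((eSD j) ℓ).1 = Finset.image ℓ.1 Finset.univ from rfl, gg_finset,
    Finset.prod_image (fun a _ b _ h => sd_inj ℓ.2.2 h)]
  apply Finset.prod_congr rfl
  intro i _
  rw [uu]

lemma toFinset_ofFn {k : ℕ} (ℓ : Fin k → ℕ) :
    (List.ofFn ℓ : Multiset ℕ).toFinset = Finset.image ℓ Finset.univ := by
  ext n
  simp [List.mem_ofFn, Set.mem_range, eq_comm]

lemma sigmaEq_eq_sub {k : ℕ} (ℓ : Fin k → ℕ) (h : ∀ a b : Fin k, a ≤ b → ℓ b ≤ ℓ a) :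
    sigmaEq ℓ = k - (List.ofFn ℓ : Multiset ℕ).toFinset.card := by
  have := sigma_add_card k ℓ h
  rw [toFinset_ofFn]
  omega

lemma zetaInterp_eq (t : ℝ) (m k : ℕ) :
    zetaInterpConst t m k = ∑' M : MS k, t ^ (k - M.1.toFinset.card) * gg m M.1 := by
  rw [zetaInterpConst,
    ← Equiv.tsum_eq (eWD k) (fun M : MS k => t ^ (k - M.1.toFinset.card) * gg m M.1)]
  apply tsum_congr
  intro ℓ
  rw [show ((eWD k) ℓ).1 = (List.ofFn ℓ.1 : Multiset ℕ) from rfl, gg_ofFn,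
    ← sigmaEq_eq_sub ℓ.1 ℓ.2.2]
  simp [uu]

lemma summable_MS {m : ℕ} (hm : 2 ≤ m) (j : ℕ) : Summable (fun M : MS j => gg m M.1) := by
  rw [← Equiv.summable_iff (eWD j)]
  have h := (summable_pi hm j).subtype
    {ℓ : Fin j → ℕ | (∀ i, 1 ≤ ℓ i) ∧ ∀ a b : Fin j, a ≤ b → ℓ b ≤ ℓ a}
  apply h.congr
  intro ℓ
  show ∏ i, uu m (ℓ.1 i) = gg m ((eWD j) ℓ).1
  rw [show ((eWD j) ℓ).1 = (List.ofFn ℓ.1 : Multiset ℕ) from rfl, gg_ofFn]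

lemma summable_FS {m : ℕ} (hm : 2 ≤ m) (j : ℕ) : Summable (fun S : FS j => gg m S.1.val) := by
  rw [← Equiv.summable_iff (eSD j)]
  have h := (summable_pi hm j).subtype
    {ℓ : Fin j → ℕ | (∀ i, 1 ≤ ℓ i) ∧ ∀ a b : Fin j, a < b → ℓ b < ℓ a}
  apply h.congr
  intro ℓ
  show ∏ i, uu m (ℓ.1 i) = gg m ((eSD j) ℓ).1.val
  rw [show ((eSD j) ℓ).1 = Finset.image ℓ.1 Finset.univ from rfl, gg_finset,
    Finset.prod_image (fun a _ b _ h => sd_inj ℓ.2.2 h)]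

lemma finset_val_le {S : Finset ℕ} {M : Multiset ℕ} (h : S ⊆ M.toFinset) : S.val ≤ M := by
  rw [Multiset.le_iff_count]
  intro a
  by_cases ha : a ∈ S
  · rw [Multiset.count_eq_one_of_mem S.nodup ha]
    exact Multiset.one_le_count_iff_mem.2 (Multiset.mem_toFinset.1 (h ha))
  · have : a ∉ S.val := fun hx => ha hx
    rw [Multiset.count_eq_zero_of_notMem this]
    omega

section Main

variable (m k : ℕ) (t : ℝ)

noncomputable def W (x : MS k × Finset ℕ) : ℝ :=
  if x.2 ⊆ x.1.1.toFinset then t ^ (k - x.2.card) * (1 - t) ^ x.2.card * gg m x.1.1 else 0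

noncomputable def Wj (j : ℕ) (x : MS k × Finset ℕ) : ℝ :=
  if x.2.card = k - j ∧ x.2 ⊆ x.1.1.toFinset then t ^ j * (1 - t) ^ (k - j) * gg m x.1.1 else 0

noncomputable def H (x : MS k × Finset ℕ) : ℝ :=
  if x.2 ⊆ x.1.1.toFinset then gg m x.1.1 else 0

lemma card_toFinset_le (M : MS k) : M.1.toFinset.card ≤ k := by
  have h1 := Multiset.toFinset_card_le M.1
  have h2 := M.2.1
  omega

lemma H_nonneg : ∀ x, 0 ≤ H m k x := by
  intro x
  rw [H]
  split
  · exact gg_nonneg _ _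
  · exact le_rfl

lemma summable_H (hm : 2 ≤ m) : Summable (H m k) := by
  rw [summable_prod_of_nonneg (fun x => H_nonneg m k x)]
  constructor
  · intro M
    apply summable_of_ne_finset_zero (s := M.1.toFinset.powerset)
    intro S hS
    rw [H, if_neg (fun hsub => hS (Finset.mem_powerset.mpr hsub))]
  · apply Summable.of_nonneg_of_le
      (fun M => tsum_nonneg (fun S => H_nonneg m k (M, S)))
      (fun M => ?_) ((summable_MS hm k).mul_left ((2:ℝ)^k))
    rw [tsum_eq_sum (s := M.1.toFinset.powerset)
      (fun S hS => by rw [H, if_neg (fun hsub => hS (Finset.mem_powerset.mpr hsub))])]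
    calc ∑ S ∈ M.1.toFinset.powerset, H m k (M, S)
        ≤ ∑ _S ∈ M.1.toFinset.powerset, gg m M.1 := by
          apply Finset.sum_le_sum
          intro S _
          rw [H]
          split
          · exact le_rfl
          · exact gg_nonneg _ _
      _ = (2 ^ M.1.toFinset.card : ℕ) * gg m M.1 := by
          rw [Finset.sum_const, Finset.card_powerset, nsmul_eq_mul]
      _ ≤ (2:ℝ)^k * gg m M.1 := by
          apply mul_le_mul_of_nonneg_right _ (gg_nonneg _ _)
          push_cast
          exact pow_le_pow_right₀ one_le_two (card_toFinset_le k M)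

lemma pow_abs_le (a : ℝ) (i n : ℕ) (h : i ≤ n) : |a| ^ i ≤ (max 1 |a|) ^ n :=
  le_trans (pow_le_pow_left₀ (abs_nonneg a) (le_max_right 1 |a|) i)
    (pow_le_pow_right₀ (le_max_left 1 |a|) h)

lemma abs_term_le {a b : ℕ} (ha : a ≤ k) (hb : b ≤ k) (g : ℝ) (hg : 0 ≤ g) :
    |t ^ a * (1 - t) ^ b * g| ≤ (max 1 |t|) ^ k * (max 1 |1 - t|) ^ k * g := by
  rw [abs_mul, abs_mul, abs_pow, abs_pow, abs_of_nonneg hg]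
  apply mul_le_mul_of_nonneg_right _ hg
  apply mul_le_mul (pow_abs_le t a k ha) (pow_abs_le (1 - t) b k hb)
    (pow_nonneg (abs_nonneg _) _) (pow_nonneg (le_trans zero_le_one (le_max_left _ _)) _)

lemma summable_W (hm : 2 ≤ m) : Summable (W m k t) := by
  apply Summable.of_abs
  apply Summable.of_nonneg_of_le (fun x => abs_nonneg _) (fun x => ?_)
    ((summable_H m k hm).mul_left ((max 1 |t|) ^ k * (max 1 |1 - t|) ^ k))
  rw [W, H]
  split
  · rename_i hsub
    exact abs_term_le k t (Nat.sub_le k _)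
      (le_trans (Finset.card_le_card hsub) (card_toFinset_le k _)) _ (gg_nonneg _ _)
  · simp

lemma summable_Wj (hm : 2 ≤ m) (j : ℕ) (hj : j ≤ k) : Summable (Wj m k t j) := by
  apply Summable.of_abs
  apply Summable.of_nonneg_of_le (fun x => abs_nonneg _) (fun x => ?_)
    ((summable_H m k hm).mul_left ((max 1 |t|) ^ k * (max 1 |1 - t|) ^ k))
  rw [Wj, H]
  by_cases hc : x.2.card = k - j ∧ x.2 ⊆ x.1.1.toFinset
  · rw [if_pos hc, if_pos hc.2]
    exact abs_term_le k t hj (Nat.sub_le k j) _ (gg_nonneg _ _)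
  · rw [if_neg hc]
    split
    · simpa using mul_nonneg (mul_nonneg (pow_nonneg (le_trans zero_le_one (le_max_left _ _)) _)
        (pow_nonneg (le_trans zero_le_one (le_max_left _ _)) _)) (gg_nonneg _ _)
    · simp

lemma key_sum (F : Finset ℕ) (hF : F.card ≤ k) :
    ∑ S ∈ F.powerset, t ^ (k - S.card) * (1 - t) ^ S.card = t ^ (k - F.card) := by
  have h1 : ∑ S ∈ F.powerset, (1 - t) ^ S.card * t ^ (F.card - S.card) = 1 := by
    have h := Finset.prod_add (fun _ : ℕ => (1 - t)) (fun _ : ℕ => t) F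
    have hL : ∏ _i ∈ F, ((1 - t) + t) = 1 := by
      rw [show (1 - t) + t = 1 by ring, Finset.prod_const_one]
    rw [hL] at h
    have h2 : ∑ S ∈ F.powerset, (1 - t) ^ S.card * t ^ (F.card - S.card)
        = ∑ T ∈ F.powerset, (∏ _i ∈ T, (1 - t)) * ∏ _i ∈ F \ T, t := by
      apply Finset.sum_congr rfl
      intro S hS
      rw [Finset.prod_const, Finset.prod_const, Finset.card_sdiff_of_subset (Finset.mem_powerset.mp hS)]
    rw [h2, ← h]
  calc ∑ S ∈ F.powerset, t ^ (k - S.card) * (1 - t) ^ S.card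
      = t ^ (k - F.card) * ∑ S ∈ F.powerset, (1 - t) ^ S.card * t ^ (F.card - S.card) := by
        rw [Finset.mul_sum]
        apply Finset.sum_congr rfl
        intro S hS
        have hc : S.card ≤ F.card := Finset.card_le_card (Finset.mem_powerset.mp hS)
        rw [show k - S.card = (k - F.card) + (F.card - S.card) by omega, pow_add]
        ring
    _ = t ^ (k - F.card) := by rw [h1, mul_one]

lemma sum_Wj_eq (x : MS k × Finset ℕ) :
    ∑ j ∈ Finset.range (k + 1), Wj m k t j x = W m k t x := by
  by_cases hsub : x.2 ⊆ x.1.1.toFinset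
  · have hcard : x.2.card ≤ k := le_trans (Finset.card_le_card hsub) (card_toFinset_le k _)
    rw [Finset.sum_eq_single (k - x.2.card)]
    · rw [Wj, if_pos ⟨by omega, hsub⟩, W, if_pos hsub,
        show k - (k - x.2.card) = x.2.card by omega]
    · intro j hj hne
      rw [Wj, if_neg]
      rintro ⟨h1, -⟩
      rw [Finset.mem_range] at hj
      exact hne (by omega)
    · intro hmem
      exact absurd (Finset.mem_range.mpr (by omega)) hmem
  · rw [W, if_neg hsub]
    apply Finset.sum_eq_zero
    intro j _
    rw [Wj, if_neg]
    rintro ⟨-, h2⟩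
    exact hsub h2

lemma lhs_eq (hm : 2 ≤ m) : zetaInterpConst t m k = ∑' x, W m k t x := by
  rw [zetaInterp_eq t m k,
    Summable.tsum_prod' (summable_W m k t hm) (fun M => summable_of_ne_finset_zero
      (s := M.1.toFinset.powerset)
      (fun S hS => by rw [W, if_neg (fun hsub => hS (Finset.mem_powerset.mpr hsub))]))]
  apply tsum_congr
  intro M
  rw [tsum_eq_sum (s := M.1.toFinset.powerset)
    (fun S hS => by rw [W, if_neg (fun hsub => hS (Finset.mem_powerset.mpr hsub))])]
  have h2 : ∑ S ∈ M.1.toFinset.powerset, W m k t (M, S)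
      = ∑ S ∈ M.1.toFinset.powerset, t ^ (k - S.card) * (1 - t) ^ S.card * gg m M.1 := by
    apply Finset.sum_congr rfl
    intro S hS
    rw [W, if_pos (Finset.mem_powerset.mp hS)]
  rw [h2, ← Finset.sum_mul, key_sum k t _ (card_toFinset_le k M)]

lemma rhs_term (hm : 2 ≤ m) (j : ℕ) (hj : j ≤ k) :
    t ^ j * zetaStarConst m j * (1 - t) ^ (k - j) * zetaConst m (k - j)
      = ∑' x, Wj m k t j x := by
  rw [zetaStar_eq, zeta_eq]
  have hA := summable_MS hm j
  have hB := summable_FS hm (k - j)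
  have hprod := tsum_mul_tsum_of_summable_norm
    (f := fun A : MS j => gg m A.1) (g := fun B : FS (k - j) => gg m B.1.val)
    (by simpa [Real.norm_eq_abs, abs_of_nonneg (gg_nonneg m _)] using hA)
    (by simpa [Real.norm_eq_abs, abs_of_nonneg (gg_nonneg m _)] using hB)
  have hstep : t ^ j * (∑' A : MS j, gg m A.1) * (1 - t) ^ (k - j)
        * (∑' B : FS (k - j), gg m B.1.val)
      = ∑' z : MS j × FS (k - j), t ^ j * (1 - t) ^ (k - j) * (gg m z.1.1 * gg m z.2.1.val) := by
    calc t ^ j * (∑' A : MS j, gg m A.1) * (1 - t) ^ (k - j)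
        * (∑' B : FS (k - j), gg m B.1.val)
        = t ^ j * (1 - t) ^ (k - j)
          * ((∑' A : MS j, gg m A.1) * (∑' B : FS (k - j), gg m B.1.val)) := by ring
      _ = t ^ j * (1 - t) ^ (k - j)
          * (∑' z : MS j × FS (k - j), gg m z.1.1 * gg m z.2.1.val) := by rw [hprod]
      _ = ∑' z : MS j × FS (k - j), t ^ j * (1 - t) ^ (k - j) * (gg m z.1.1 * gg m z.2.1.val) := by
          rw [tsum_mul_left]
  rw [hstep]
  have hφ : ∀ z : MS j × FS (k - j),
      t ^ j * (1 - t) ^ (k - j) * (gg m z.1.1 * gg m z.2.1.val)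
      = Wj m k t j ((⟨z.1.1 + z.2.1.val, by
          rw [Multiset.card_add, z.1.2.1]
          have := z.2.2.1
          have : Multiset.card z.2.1.val = k - j := z.2.2.1
          omega, by
          intro n hn
          rw [Multiset.mem_add] at hn
          rcases hn with hn | hn
          · exact z.1.2.2 n hn
          · exact z.2.2.2 n hn⟩ : MS k), z.2.1) := by
    intro z
    rw [Wj, if_pos, gg_add]
    constructor
    · exact z.2.2.1
    · intro n hn
      rw [Multiset.mem_toFinset, Multiset.mem_add]
      exact Or.inr hn
  rw [tsum_congr hφ]
  apply Function.Injective.tsum_eq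
  · rintro ⟨A1, B1⟩ ⟨A2, B2⟩ he
    rw [Prod.ext_iff] at he
    obtain ⟨he1, he2⟩ := he
    have hB : B1 = B2 := Subtype.ext he2
    subst hB
    have hA : A1.1 = A2.1 := by
      have := congrArg Subtype.val he1
      simpa using this
    exact Prod.ext_iff.mpr ⟨Subtype.ext hA, rfl⟩
  · intro x hx
    rw [Function.mem_support, Wj] at hx
    by_cases hc : x.2.card = k - j ∧ x.2 ⊆ x.1.1.toFinset
    · obtain ⟨hc1, hc2⟩ := hc
      have hle : x.2.val ≤ x.1.1 := finset_val_le hc2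
      refine ⟨(⟨x.1.1 - x.2.val, ?_, ?_⟩, ⟨x.2, hc1, ?_⟩), ?_⟩
      · rw [Multiset.card_sub hle, x.1.2.1]
        have : Multiset.card x.2.val = x.2.card := rfl
        omega
      · intro n hn
        exact x.1.2.2 n (Multiset.mem_of_le (tsub_le_self) hn)
      · intro n hn
        exact x.1.2.2 n (Multiset.mem_toFinset.mp (hc2 hn))
      · dsimp only
        refine Prod.ext_iff.mpr ⟨?_, rfl⟩
        apply Subtype.ext
        show x.1.1 - x.2.val + x.2.val = x.1.1
        exact tsub_add_cancel_of_le hle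
    · exact absurd (if_neg hc) hx

end Main

lemma main_eq (m k : ℕ) (hm : 2 ≤ m) (t : ℝ) :
    zetaInterpConst t m k =
      ∑ j ∈ Finset.range (k + 1),
        t ^ j * zetaStarConst m j * (1 - t) ^ (k - j) * zetaConst m (k - j) := by
  rw [lhs_eq m k t hm]
  rw [Finset.sum_congr rfl (fun j hj => rhs_term m k t hm j
    (by rw [Finset.mem_range] at hj; omega))]
  rw [← Summable.tsum_finsetSum (fun j hj => summable_Wj m k t hm j
    (by rw [Finset.mem_range] at hj; omega))]
  apply tsum_congr
  intro x
  exact (sum_Wj_eq m k t x).symm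

end IZD

theorem interpolated_zeta_decomposition (m k : ℕ) (hm : 2 ≤ m) (t : ℝ) :
    zetaInterpConst t m k =
      ∑ j ∈ Finset.range (k + 1),
        t ^ j * zetaStarConst m j * (1 - t) ^ (k - j) * zetaConst m (k - j) := by
  exact IZD.main_eq m k hm t
end

section
/- For m ≥ 1, n ≥ 1, k ≥ 0: the interpolated truncated multiple zeta value decomposes over compositions: ∑_{n ≥ ℓ_1 ≥ ... ≥ ℓ_k ≥ 1} t^{σ(ℓ)}/(ℓ_1···ℓ_k)^m = ∑_{(r_1,...,r_s) composition of k} t^{k-s} · ζ_n(m·r_1, ..., m·r_s), where ζ_n(i_1,...,i_s) = ∑_{n ≥ j_1 > ... > j_s ≥ 1} 1/(j_1^{i_1}···j_s^{i_s}). -/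
/-- The set of weakly decreasing `k`-tuples with entries in `{1,...,n}`. -/
def multisetTuples (n k : ℕ) : Finset (Fin k → ℕ) :=
  (Fintype.piFinset fun _ : Fin k => Finset.Icc 1 n).filter
    fun ℓ => ∀ i j : Fin k, i ≤ j → ℓ j ≤ ℓ i

/-- The set of strictly decreasing `k`-tuples with entries in `{1,...,n}`. -/
def setTuples (n k : ℕ) : Finset (Fin k → ℕ) :=
  (Fintype.piFinset fun _ : Fin k => Finset.Icc 1 n).filter
    fun ℓ => ∀ i j : Fin k, i < j → ℓ j < ℓ i

namespace IZCD

lemma index_mono {k : ℕ} (c : Composition k) {i j : Fin k} (h : i ≤ j) :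
    c.index i ≤ c.index j := by
  by_contra H
  push_neg at H
  have h1 : (j:ℕ) < c.sizeUpTo (c.index j + 1) := c.lt_sizeUpTo_index_succ j
  have h2 : c.sizeUpTo (c.index i) ≤ i := c.sizeUpTo_index_le i
  have : c.sizeUpTo (c.index j + 1) ≤ c.sizeUpTo (c.index i) :=
    c.monotone_sizeUpTo (by omega)
  omega

lemma index_eq_iff {k : ℕ} (c : Composition k) (i : Fin k) (b : Fin c.length) :
    c.index i = b ↔ c.sizeUpTo b ≤ (i:ℕ) ∧ (i:ℕ) < c.sizeUpTo ((b:ℕ) + 1) := by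
  constructor
  · rintro rfl
    exact ⟨c.sizeUpTo_index_le i, c.lt_sizeUpTo_index_succ i⟩
  · rintro ⟨h1, h2⟩
    have h3 : c.sizeUpTo (c.index i) ≤ i := c.sizeUpTo_index_le i
    have h4 : (i:ℕ) < c.sizeUpTo (c.index i + 1) := c.lt_sizeUpTo_index_succ i
    rcases lt_trichotomy (c.index i) b with h | h | h
    · have : c.sizeUpTo ((c.index i : ℕ) + 1) ≤ c.sizeUpTo b := c.monotone_sizeUpTo (by omega)
      exfalso; omega
    · exact h
    · have : c.sizeUpTo ((b:ℕ) + 1) ≤ c.sizeUpTo (c.index i) := c.monotone_sizeUpTo (by omega)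
      exfalso; omega

lemma sizeUpTo_lt {k : ℕ} (c : Composition k) (b : Fin c.length) : c.sizeUpTo b < k := by
  have h1 : c.sizeUpTo b < c.sizeUpTo ((b:ℕ)+1) := c.sizeUpTo_strict_mono b.2
  have h2 : c.sizeUpTo ((b:ℕ)+1) ≤ c.sizeUpTo c.length := c.monotone_sizeUpTo b.2
  rw [c.sizeUpTo_length] at h2
  omega

lemma fiber_card {k : ℕ} (c : Composition k) (b : Fin c.length) :
    (Finset.univ.filter fun i : Fin k => c.index i = b).card = c.blocksFun b := by
  have : (Finset.univ.filter fun i : Fin k => c.index i = b)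
      = Finset.univ.map (c.embedding b).toEmbedding := by
    ext i
    simp only [Finset.mem_filter, Finset.mem_univ, true_and, Finset.mem_map]
    constructor
    · intro h
      have := c.mem_range_embedding i
      rw [h] at this
      obtain ⟨x, hx⟩ := this
      exact ⟨x, hx⟩
    · rintro ⟨x, -, rfl⟩
      exact c.index_embedding b x
  rw [this, Finset.card_map, Finset.card_univ, Fintype.card_fin]

lemma prod_index {k : ℕ} (c : Composition k) (f : Fin c.length → ℝ) :
    ∏ i : Fin k, f (c.index i) = ∏ b : Fin c.length, f b ^ c.blocksFun b := by
  rw [← Fintype.prod_equiv c.blocksFinEquiv (fun p => f p.1) (fun i => f (c.index i))]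
  · rw [← Finset.univ_sigma_univ, Finset.prod_sigma]
    simp [Finset.prod_const]
  · rintro ⟨b, x⟩
    simp [Composition.blocksFinEquiv, c.index_embedding]

lemma card_filter_ne_zero (d : ℕ) :
    (Finset.univ.filter fun i : Fin d => (i:ℕ) ≠ 0).card = d - 1 := by
  cases d with
  | zero => simp
  | succ d =>
    have : (Finset.univ.filter fun i : Fin (d+1) => (i:ℕ) ≠ 0) = Finset.univ.erase 0 := by
      ext i
      simp only [Finset.mem_filter, Finset.mem_univ, true_and, Finset.mem_erase, and_true, ne_eq,
        Fin.ext_iff, Fin.val_zero]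
    rw [this, Finset.card_erase_of_mem (Finset.mem_univ _), Finset.card_univ, Fintype.card_fin]

lemma card_adj (k : ℕ) :
    (Finset.univ.filter fun p : Fin k × Fin k => (p.2:ℕ) = (p.1:ℕ) + 1).card = k - 1 := by
  rw [← card_filter_ne_zero k]
  apply Finset.card_bij' (fun p _ => p.2)
    (fun i _ => (⟨(i:ℕ) - 1, by omega⟩, i))
  · intro p hp
    simp only [Finset.mem_filter, Finset.mem_univ, true_and] at hp
    have : ((⟨(p.2:ℕ) - 1, by omega⟩ : Fin k) : ℕ) = (p.1 : ℕ) := by simp; omega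
    ext
    · exact this
    · rfl
  · intro i _
    rfl
  · intro p hp
    simp only [Finset.mem_filter, Finset.mem_univ, true_and] at hp ⊢
    omega
  · intro i hi
    simp only [Finset.mem_filter, Finset.mem_univ, true_and] at hi ⊢
    show (i:ℕ) = (i:ℕ) - 1 + 1
    omega

lemma card_ne {k : ℕ} (c : Composition k) :
    (Finset.univ.filter fun p : Fin k × Fin k =>
      ((p.2:ℕ) = (p.1:ℕ) + 1 ∧ c.index p.1 ≠ c.index p.2)).card = c.length - 1 := by
  rw [← card_filter_ne_zero c.length]
  apply Finset.card_bij' (fun p _ => c.index p.2)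
    (fun b _ => (⟨c.sizeUpTo b - 1, by have := sizeUpTo_lt c b; omega⟩,
                 ⟨c.sizeUpTo b, sizeUpTo_lt c b⟩))
  · intro p hp
    simp only [Finset.mem_filter, Finset.mem_univ, true_and] at hp
    obtain ⟨hadj, hne⟩ := hp
    have hlt : c.index p.1 < c.index p.2 := lt_of_le_of_ne (index_mono c (by omega : p.1 ≤ p.2)) hne
    have h1 : c.sizeUpTo (c.index p.2) ≤ p.2 := c.sizeUpTo_index_le p.2
    have h2 : (p.1:ℕ) < c.sizeUpTo ((c.index p.1 : ℕ) + 1) := c.lt_sizeUpTo_index_succ p.1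
    have h3 : c.sizeUpTo ((c.index p.1:ℕ) + 1) ≤ c.sizeUpTo (c.index p.2) :=
      c.monotone_sizeUpTo (by omega)
    have key : c.sizeUpTo (c.index p.2) = (p.2:ℕ) := by omega
    ext
    · show c.sizeUpTo (c.index p.2) - 1 = (p.1:ℕ); omega
    · show c.sizeUpTo (c.index p.2) = (p.2:ℕ); omega
  · intro b hb
    show c.index ⟨c.sizeUpTo b, _⟩ = b
    rw [index_eq_iff]
    refine ⟨le_refl _, ?_⟩
    exact c.sizeUpTo_strict_mono b.2
  · intro p hp
    simp only [Finset.mem_filter, Finset.mem_univ, true_and] at hp ⊢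
    obtain ⟨hadj, hne⟩ := hp
    have hlt : c.index p.1 < c.index p.2 := lt_of_le_of_ne (index_mono c (by omega : p.1 ≤ p.2)) hne
    omega
  · intro b hb
    simp only [Finset.mem_filter, Finset.mem_univ, true_and] at hb ⊢
    have hpos : 0 < c.sizeUpTo b := by
      have h0 : c.sizeUpTo 0 < c.sizeUpTo 1 :=
        c.sizeUpTo_strict_mono (lt_of_le_of_lt (Nat.zero_le _) b.2)
      have h1 : c.sizeUpTo 1 ≤ c.sizeUpTo b := c.monotone_sizeUpTo (by omega)
      simp only [Composition.sizeUpTo_zero] at h0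
      omega
    have hidx : c.index ⟨c.sizeUpTo b, sizeUpTo_lt c b⟩ = b := by
      rw [index_eq_iff]
      exact ⟨le_refl _, c.sizeUpTo_strict_mono b.2⟩
    constructor
    · show c.sizeUpTo b = c.sizeUpTo b - 1 + 1; omega
    · intro h
      rw [hidx, index_eq_iff] at h
      have : c.sizeUpTo b ≤ c.sizeUpTo b - 1 := h.1
      omega

lemma sigmaEq_comp {k : ℕ} (c : Composition k) (j : Fin c.length → ℕ)
    (hj : Function.Injective j) :
    sigmaEq (fun i => j (c.index i)) = k - c.length := by
  show (Finset.univ.filter fun p : Fin k × Fin k =>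
      (p.2:ℕ) = (p.1:ℕ) + 1 ∧ j (c.index p.1) = j (c.index p.2)).card = k - c.length
  have e1 : (Finset.univ.filter fun p : Fin k × Fin k =>
      (p.2:ℕ) = (p.1:ℕ) + 1 ∧ j (c.index p.1) = j (c.index p.2))
      = (Finset.univ.filter fun p : Fin k × Fin k => (p.2:ℕ) = (p.1:ℕ) + 1).filter
          (fun p => c.index p.1 = c.index p.2) := by
    rw [Finset.filter_filter]
    apply Finset.filter_congr
    intro p _
    constructor
    · rintro ⟨h1, h2⟩; exact ⟨h1, hj h2⟩
    · rintro ⟨h1, h2⟩; exact ⟨h1, by rw [h2]⟩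
  have e2 : (Finset.univ.filter fun p : Fin k × Fin k =>
      (p.2:ℕ) = (p.1:ℕ) + 1 ∧ c.index p.1 ≠ c.index p.2)
      = (Finset.univ.filter fun p : Fin k × Fin k => (p.2:ℕ) = (p.1:ℕ) + 1).filter
          (fun p => ¬ c.index p.1 = c.index p.2) := by
    rw [Finset.filter_filter]
  have e3 := Finset.card_filter_add_card_filter_not
    (s := Finset.univ.filter fun p : Fin k × Fin k => (p.2:ℕ) = (p.1:ℕ) + 1)
    (p := fun p => c.index p.1 = c.index p.2)
  rw [e1]
  have h1 := card_adj k
  have h2 := card_ne c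
  rw [e2] at h2
  have hlen : c.length ≤ k := c.length_le
  rcases Nat.eq_zero_or_pos k with rfl | hk
  · omega
  · have := c.length_pos_of_pos hk
    omega

def extL {k : ℕ} (ℓ : Fin k → ℕ) : ℕ → ℕ := fun i => if h : i < k then ℓ ⟨i, h⟩ else 0

def tupleCAS {k : ℕ} (ℓ : Fin k → ℕ) : CompositionAsSet k where
  boundaries := Finset.univ.filter
    (fun i : Fin (k+1) => (i:ℕ) = 0 ∨ (i:ℕ) = k ∨ extL ℓ ((i:ℕ)-1) ≠ extL ℓ (i:ℕ))
  zero_mem := by simp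
  getLast_mem := by simp

def tupleComp {k : ℕ} (ℓ : Fin k → ℕ) : Composition k := (tupleCAS ℓ).toComposition

/-- Values of the runs. -/
def tupleVals {k : ℕ} (ℓ : Fin k → ℕ) : Fin (tupleComp ℓ).length → ℕ :=
  fun b => extL ℓ ((tupleComp ℓ).sizeUpTo b)

lemma mem_bd {k : ℕ} (ℓ : Fin k → ℕ) (x : ℕ) (hx : x ≤ k) :
    (∃ b : Fin ((tupleComp ℓ).length + 1), (tupleComp ℓ).sizeUpTo b = x) ↔
      (x = 0 ∨ x = k ∨ extL ℓ (x-1) ≠ extL ℓ x) := by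
  have h : (tupleComp ℓ).boundaries = (tupleCAS ℓ).boundaries :=
    CompositionAsSet.toComposition_boundaries (tupleCAS ℓ)
  have h1 : (⟨x, by omega⟩ : Fin (k+1)) ∈ (tupleComp ℓ).boundaries ↔
      ∃ b : Fin ((tupleComp ℓ).length + 1), (tupleComp ℓ).sizeUpTo b = x := by
    simp [Composition.boundaries, Composition.boundary, Fin.ext_iff,
      OrderEmbedding.ofStrictMono]
  have h2 : (⟨x, by omega⟩ : Fin (k+1)) ∈ (tupleCAS ℓ).boundaries ↔
      (x = 0 ∨ x = k ∨ extL ℓ (x-1) ≠ extL ℓ x) := by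
    simp [tupleCAS]
  rw [← h1, h, h2]

lemma const_block {k : ℕ} (ℓ : Fin k → ℕ) (i : Fin k) :
    extL ℓ i = extL ℓ ((tupleComp ℓ).sizeUpTo ((tupleComp ℓ).index i)) := by
  set c := tupleComp ℓ with hc
  set b := c.index i with hb
  have hub : (i:ℕ) < c.sizeUpTo ((b:ℕ)+1) := c.lt_sizeUpTo_index_succ i
  have key : ∀ x, c.sizeUpTo b ≤ x → x ≤ (i:ℕ) → extL ℓ x = extL ℓ (c.sizeUpTo b) := by
    intro x hx
    induction x, hx using Nat.le_induction with
    | base => intro _; rfl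
    | succ x hx ih =>
      intro hxi
      have hnb : ¬ ∃ b' : Fin (c.length + 1), c.sizeUpTo b' = x + 1 := by
        rintro ⟨b', hb'⟩
        have hgt : (b:ℕ) < (b':ℕ) := by
          by_contra hle
          push_neg at hle
          have : c.sizeUpTo b' ≤ c.sizeUpTo b := c.monotone_sizeUpTo hle
          omega
        have : c.sizeUpTo ((b:ℕ)+1) ≤ c.sizeUpTo b' := c.monotone_sizeUpTo hgt
        omega
      rw [mem_bd ℓ (x+1) (by omega)] at hnb
      push_neg at hnb
      have heq : extL ℓ x = extL ℓ (x+1) := by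
        have := hnb.2.2
        simpa using this
      rw [← heq] at *
      exact ih (by omega)
  have := key (i:ℕ) (c.sizeUpTo_index_le i) (le_refl _)
  exact this


lemma index_sizeUpTo {k : ℕ} (c : Composition k) (b : Fin c.length) :
    c.index ⟨c.sizeUpTo b, sizeUpTo_lt c b⟩ = b := by
  rw [index_eq_iff]
  exact ⟨le_refl _, c.sizeUpTo_strict_mono b.2⟩

lemma comp_mem_boundaries {k : ℕ} (c : Composition k) (i : Fin (k+1)) :
    i ∈ c.boundaries ↔ ∃ b : Fin (c.length + 1), c.sizeUpTo b = (i:ℕ) := by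
  simp [Composition.boundaries, Composition.boundary, Fin.ext_iff,
    OrderEmbedding.ofStrictMono]

lemma setTuples_inj {n k : ℕ} {j : Fin k → ℕ} (hj : j ∈ setTuples n k) :
    Function.Injective j := by
  simp only [setTuples, Finset.mem_filter] at hj
  intro a b hab
  rcases lt_trichotomy a b with h | h | h
  · exact absurd hab (hj.2 a b h).ne'
  · exact h
  · exact absurd hab (hj.2 b a h).ne

lemma forward_mem {n k : ℕ} (c : Composition k) {j : Fin c.length → ℕ}
    (hj : j ∈ setTuples n c.length) :
    (fun i => j (c.index i)) ∈ multisetTuples n k := by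
  simp only [setTuples, multisetTuples, Finset.mem_filter, Fintype.mem_piFinset] at *
  obtain ⟨h1, h2⟩ := hj
  refine ⟨fun i => h1 _, ?_⟩
  intro i i' hii'
  rcases eq_or_lt_of_le (index_mono c hii') with h | h
  · rw [h]
  · exact (h2 _ _ h).le

lemma tupleVals_adj {k : ℕ} (ℓ : Fin k → ℕ) (hd : ∀ i j : Fin k, i ≤ j → ℓ j ≤ ℓ i)
    (x : ℕ) (hx : x + 1 < (tupleComp ℓ).length) :
    extL ℓ ((tupleComp ℓ).sizeUpTo (x+1)) < extL ℓ ((tupleComp ℓ).sizeUpTo x) := by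
  set c := tupleComp ℓ with hc
  set s := c.sizeUpTo (x+1) with hs
  have hsk : s < k := sizeUpTo_lt c ⟨x+1, hx⟩
  have hs0 : 0 < s := by
    have h0 : c.sizeUpTo 0 < c.sizeUpTo 1 := c.sizeUpTo_strict_mono (by omega)
    have h1 : c.sizeUpTo 1 ≤ c.sizeUpTo (x+1) := c.monotone_sizeUpTo (by omega)
    simp only [Composition.sizeUpTo_zero] at h0
    omega
  have hbd : ∃ b' : Fin (c.length + 1), c.sizeUpTo b' = s := ⟨⟨x+1, by omega⟩, rfl⟩
  rw [mem_bd ℓ s (by omega)] at hbd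
  have hne : extL ℓ (s-1) ≠ extL ℓ s := by
    rcases hbd with h | h | h
    · omega
    · omega
    · exact h
  have hle : extL ℓ s ≤ extL ℓ (s-1) := by
    have := hd ⟨s-1, by omega⟩ ⟨s, hsk⟩ (by simp only [Fin.mk_le_mk]; omega)
    simpa [extL, dif_pos hsk, dif_pos (show s - 1 < k by omega)] using this
  have hidx : c.index ⟨s-1, by omega⟩ = ⟨x, by omega⟩ := by
    rw [index_eq_iff]
    constructor
    · show c.sizeUpTo x ≤ s - 1
      have := c.sizeUpTo_strict_mono (show x < c.length by omega)
      omega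
    · show s - 1 < c.sizeUpTo (x+1)
      omega
  have hcb := const_block ℓ ⟨s-1, by omega⟩
  rw [hidx] at hcb
  have hcoe : c.sizeUpTo ((⟨x, by omega⟩ : Fin c.length) : ℕ) = c.sizeUpTo x := rfl
  rw [hcoe] at hcb
  have hcoe2 : extL ℓ ((⟨s-1, by omega⟩ : Fin k) : ℕ) = extL ℓ (s-1) := rfl
  rw [hcoe2] at hcb
  omega

lemma tupleVals_anti {k : ℕ} (ℓ : Fin k → ℕ) (hd : ∀ i j : Fin k, i ≤ j → ℓ j ≤ ℓ i)
    (b b' : Fin (tupleComp ℓ).length) (h : b < b') :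
    tupleVals ℓ b' < tupleVals ℓ b := by
  have key : ∀ d : ℕ, ∀ x : ℕ, x + d < (tupleComp ℓ).length → 0 < d →
      extL ℓ ((tupleComp ℓ).sizeUpTo (x + d)) < extL ℓ ((tupleComp ℓ).sizeUpTo x) := by
    intro d
    induction d with
    | zero => omega
    | succ d ih =>
      intro x hx hd0
      rcases Nat.eq_zero_or_pos d with rfl | hd1
      · exact tupleVals_adj ℓ hd x (by omega)
      · have h1 : extL ℓ ((tupleComp ℓ).sizeUpTo (x + d + 1)) < extL ℓ ((tupleComp ℓ).sizeUpTo (x + d)) :=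
          tupleVals_adj ℓ hd (x + d) (by omega)
        have h2 := ih x (by omega) hd1
        show extL ℓ ((tupleComp ℓ).sizeUpTo (x + d + 1)) < extL ℓ ((tupleComp ℓ).sizeUpTo x)
        omega
  have := key ((b':ℕ) - (b:ℕ)) (b:ℕ) (by omega) (by exact_mod_cast Nat.sub_pos_of_lt h)
  have e : (b:ℕ) + ((b':ℕ) - (b:ℕ)) = (b':ℕ) := by
    have : (b:ℕ) < (b':ℕ) := h
    omega
  rw [e] at this
  exact this

lemma backward_mem {n k : ℕ} {ℓ : Fin k → ℕ} (hℓ : ℓ ∈ multisetTuples n k) :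
    tupleVals ℓ ∈ setTuples n (tupleComp ℓ).length := by
  simp only [setTuples, multisetTuples, Finset.mem_filter, Fintype.mem_piFinset] at *
  obtain ⟨h1, h2⟩ := hℓ
  constructor
  · intro b
    have hlt := sizeUpTo_lt (tupleComp ℓ) b
    have : tupleVals ℓ b = ℓ ⟨(tupleComp ℓ).sizeUpTo b, hlt⟩ := by
      simp [tupleVals, extL, dif_pos hlt]
    rw [this]
    exact h1 _
  · exact fun b b' => tupleVals_anti ℓ h2 b b'

lemma FG {k : ℕ} (ℓ : Fin k → ℕ) :
    (fun i => tupleVals ℓ ((tupleComp ℓ).index i)) = ℓ := by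
  funext i
  show extL ℓ ((tupleComp ℓ).sizeUpTo ((tupleComp ℓ).index i)) = ℓ i
  rw [← const_block ℓ i]
  simp [extL, i.2]

lemma GF_comp {n k : ℕ} (c : Composition k) {j : Fin c.length → ℕ}
    (hj : j ∈ setTuples n c.length) :
    tupleComp (fun i => j (c.index i)) = c := by
  set ℓ : Fin k → ℕ := fun i => j (c.index i) with hℓ
  have hinj : Function.Injective j := setTuples_inj hj
  have hv : ∀ x (hx : x < k), extL ℓ x = j (c.index ⟨x, hx⟩) := by
    intro x hx
    simp [extL, dif_pos hx, hℓ]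
  have hbd : (tupleCAS ℓ).boundaries = c.boundaries := by
    ext i
    rw [comp_mem_boundaries]
    simp only [tupleCAS, Finset.mem_filter, Finset.mem_univ, true_and]
    have hik' : (i:ℕ) ≤ k := by omega
    constructor
    · rintro (h0 | hk | hne)
      · exact ⟨0, by simp [h0]⟩
      · exact ⟨Fin.last _, by simp [hk]⟩
      · rcases Nat.eq_zero_or_pos (i:ℕ) with h0 | hpos
        · rw [h0] at hne
          simp at hne
        rcases eq_or_lt_of_le hik' with hik | hik
        · exact ⟨Fin.last _, by simp [hik]⟩
        · have hne' : c.index ⟨(i:ℕ)-1, by omega⟩ ≠ c.index ⟨(i:ℕ), hik⟩ := by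
            intro he
            apply hne
            rw [hv _ (by omega), hv _ hik, he]
          have hlt : c.index ⟨(i:ℕ)-1, by omega⟩ < c.index ⟨(i:ℕ), hik⟩ :=
            lt_of_le_of_ne (index_mono c (by simp only [Fin.mk_le_mk]; omega)) hne'
          have h1 : c.sizeUpTo (c.index ⟨(i:ℕ), hik⟩) ≤ (i:ℕ) := c.sizeUpTo_index_le _
          have h2 : (i:ℕ)-1 < c.sizeUpTo ((c.index ⟨(i:ℕ)-1, by omega⟩ : ℕ)+1) := by
            have := c.lt_sizeUpTo_index_succ ⟨(i:ℕ)-1, by omega⟩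
            exact this
          have h3 : c.sizeUpTo ((c.index ⟨(i:ℕ)-1, by omega⟩ : ℕ)+1) ≤
              c.sizeUpTo (c.index ⟨(i:ℕ), hik⟩) := c.monotone_sizeUpTo (by exact_mod_cast hlt)
          refine ⟨⟨(c.index ⟨(i:ℕ), hik⟩ : ℕ), by omega⟩, ?_⟩
          show c.sizeUpTo (c.index ⟨(i:ℕ), hik⟩ : ℕ) = (i:ℕ)
          omega
    · rintro ⟨b, hbi⟩
      rcases Nat.eq_zero_or_pos (i:ℕ) with h0 | hpos
      · exact Or.inl h0
      rcases eq_or_lt_of_le hik' with hik | hik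
      · exact Or.inr (Or.inl hik)
      refine Or.inr (Or.inr ?_)
      have hblen : (b:ℕ) < c.length := by
        by_contra hge
        push_neg at hge
        have : c.sizeUpTo b = k := c.sizeUpTo_ofLength_le _ hge
        omega
      have hidx : c.index ⟨(i:ℕ), hik⟩ = ⟨(b:ℕ), hblen⟩ := by
        rw [index_eq_iff]
        constructor
        · show c.sizeUpTo (b:ℕ) ≤ (i:ℕ)
          omega
        · show (i:ℕ) < c.sizeUpTo ((b:ℕ)+1)
          have := c.sizeUpTo_strict_mono hblen
          omega
      have hidx2 : c.index ⟨(i:ℕ)-1, by omega⟩ ≠ ⟨(b:ℕ), hblen⟩ := by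
        intro he
        have h4 := c.sizeUpTo_index_le ⟨(i:ℕ)-1, by omega⟩
        rw [he] at h4
        have h5 : c.sizeUpTo ((⟨(b:ℕ), hblen⟩ : Fin c.length) : ℕ) = c.sizeUpTo (b:ℕ) := rfl
        have h6 : ((⟨(i:ℕ)-1, by omega⟩ : Fin k) : ℕ) = (i:ℕ)-1 := rfl
        omega
      intro heq
      apply hidx2
      rw [← hidx]
      apply hinj
      rw [← hv _ (by omega), ← hv _ hik]
      exact heq
  have hcas : tupleCAS ℓ = c.toCompositionAsSet := by
    ext1
    rw [hbd]
    rfl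
  calc tupleComp ℓ = c.toCompositionAsSet.toComposition := by rw [tupleComp, hcas]
    _ = c := (compositionEquiv k).left_inv c

end IZCD

theorem interpolated_zeta_composition_decomposition (m n k : ℕ) (hm : 1 ≤ m) (hn : 1 ≤ n)
    (t : ℝ) :
    (∑ ℓ ∈ multisetTuples n k, t ^ sigmaEq ℓ * ∏ i, (1 : ℝ) / (ℓ i : ℝ) ^ m) =
      ∑ c : Composition k,
        t ^ (k - c.length) *
          ∑ j ∈ setTuples n c.length,
            ∏ i : Fin c.length, (1 : ℝ) / (j i : ℝ) ^ (m * c.blocksFun i) := by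
  classical
  have hRHS : (∑ c : Composition k, t ^ (k - c.length) * ∑ j ∈ setTuples n c.length,
        ∏ i : Fin c.length, (1:ℝ) / (j i : ℝ) ^ (m * c.blocksFun i))
      = ∑ p ∈ (Finset.univ : Finset (Composition k)).sigma (fun c => setTuples n c.length),
          t ^ (k - p.1.length) *
            ∏ i : Fin p.1.length, (1:ℝ) / (p.2 i : ℝ) ^ (m * p.1.blocksFun i) := by
    rw [Finset.sum_sigma]
    apply Finset.sum_congr rfl
    intro c _
    rw [Finset.mul_sum]
  rw [hRHS]
  symm
  apply Finset.sum_bij'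
    (i := fun (p : Σ c : Composition k, Fin c.length → ℕ) _ =>
      (fun x : Fin k => p.2 (p.1.index x)))
    (j := fun ℓ _ => (⟨IZCD.tupleComp ℓ, IZCD.tupleVals ℓ⟩ : Σ c : Composition k, Fin c.length → ℕ))
  -- hi
  · rintro ⟨c, j⟩ hp
    rw [Finset.mem_sigma] at hp
    exact IZCD.forward_mem c hp.2
  -- hj
  · intro ℓ hℓ
    rw [Finset.mem_sigma]
    exact ⟨Finset.mem_univ _, IZCD.backward_mem hℓ⟩
  -- left_inv
  · rintro ⟨c, j⟩ hp
    rw [Finset.mem_sigma] at hp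
    have h1 : IZCD.tupleComp (fun x => j (c.index x)) = c := IZCD.GF_comp c hp.2
    have hlen : (IZCD.tupleComp (fun x => j (c.index x))).length = c.length :=
      congrArg Composition.length h1
    refine Sigma.ext h1 ?_
    rw [Fin.heq_fun_iff hlen]
    intro b
    have hblt : (b:ℕ) < c.length := lt_of_lt_of_le b.2 hlen.le
    show IZCD.extL (fun x => j (c.index x))
        ((IZCD.tupleComp (fun x => j (c.index x))).sizeUpTo (b:ℕ)) = _
    have hsz : (IZCD.tupleComp (fun x => j (c.index x))).sizeUpTo (b:ℕ)
        = c.sizeUpTo (b:ℕ) := congrFun (congrArg Composition.sizeUpTo h1) (b:ℕ)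
    rw [hsz]
    have hsl := IZCD.sizeUpTo_lt c ⟨(b:ℕ), hblt⟩
    have he : IZCD.extL (fun x => j (c.index x)) (c.sizeUpTo (b:ℕ))
        = j (c.index ⟨c.sizeUpTo (b:ℕ), hsl⟩) := by
      simp [IZCD.extL, dif_pos hsl]
    have hidx : c.index ⟨c.sizeUpTo (b:ℕ), hsl⟩ = ⟨(b:ℕ), hblt⟩ :=
      IZCD.index_sizeUpTo c ⟨(b:ℕ), hblt⟩
    rw [he, hidx]
  -- right_inv
  · intro ℓ _
    exact IZCD.FG ℓ
  -- values
  · rintro ⟨c, j⟩ hp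
    rw [Finset.mem_sigma] at hp
    have hinj : Function.Injective j := IZCD.setTuples_inj hp.2
    show t ^ (k - c.length) * ∏ i : Fin c.length, (1:ℝ) / (j i : ℝ) ^ (m * c.blocksFun i)
        = t ^ sigmaEq (fun x => j (c.index x)) * ∏ x : Fin k, (1:ℝ) / ((j (c.index x)) : ℝ) ^ m
    rw [IZCD.sigmaEq_comp c j hinj]
    congr 1
    refine Eq.trans ?_ (IZCD.prod_index c (fun b => (1:ℝ) / ((j b):ℝ) ^ m)).symm
    apply Finset.prod_congr rfl
    intro b _
    rw [div_pow, one_pow, ← pow_mul]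
end

section
/- For k > n ≥ 1 and 0 ≤ i ≤ n-1, the coefficient extraction [t^i] ∑_{j=0}^{n-1} C(k-1,j) t^j (1-t)^{n-1-j} equals C(k-n+i-1, k-n-1); that is, ∑_{j=0}^{i} C(k-1, j) C(n-1-j, i-j) (-1)^{i-j} = C(k-n+i-1, k-n-1). -/
lemma altsum (a : ℕ) (i : ℕ) :
    ∑ j ∈ Finset.range (i+1), (-1:ℤ)^(i-j) * ((a+1).choose j : ℤ) = (a.choose i : ℤ) := by
  induction i with
  | zero => simp
  | succ i IH =>
    rw [Finset.sum_range_succ]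
    have h1 : ∑ j ∈ Finset.range (i+1), (-1:ℤ)^(i+1-j) * ((a+1).choose j : ℤ)
        = -(a.choose i : ℤ) := by
      rw [← IH, ← Finset.sum_neg_distrib]
      apply Finset.sum_congr rfl
      intro j hj
      have hji : j ≤ i := Nat.lt_succ_iff.mp (Finset.mem_range.mp hj)
      have : i + 1 - j = (i - j) + 1 := by omega
      rw [this, pow_succ]
      ring
    rw [h1]
    simp only [Nat.sub_self, pow_zero, one_mul]
    have : ((a+1).choose (i+1) : ℤ) = (a.choose i : ℤ) + (a.choose (i+1) : ℤ) := by
      exact_mod_cast Nat.choose_succ_succ a i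
    rw [this]; ring

lemma key (b : ℕ) : ∀ d : ℕ, ∀ i ≤ b,
    ∑ j ∈ Finset.range (i+1),
      (-1:ℤ)^(i-j) * ((b+1+d).choose j : ℤ) * (((b-j).choose (i-j)) : ℤ)
    = ((d+i).choose i : ℤ) := by
  induction b with
  | zero =>
    intro d i hi
    interval_cases i
    simp
  | succ b IH =>
    intro d i hi
    match i, hi with
    | 0, _ => simp
    | (m+1), hi =>
      have hm : m ≤ b := Nat.lt_succ_iff.mp hi
      by_cases hmb : m + 1 ≤ b
      · -- recurrence case
        have H1 := IH (d+1) (m+1) hmb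
        have H2 := IH (d+1) m hm
        rw [Finset.sum_range_succ]
        have split : ∀ j ∈ Finset.range (m+1),
            (-1:ℤ)^(m+1-j) * ((b+1+1+d).choose j : ℤ) * (((b+1-j).choose (m+1-j)) : ℤ)
            = (-1:ℤ)^(m+1-j) * ((b+1+(d+1)).choose j : ℤ) * (((b-j).choose (m+1-j)) : ℤ)
              - (-1:ℤ)^(m-j) * ((b+1+(d+1)).choose j : ℤ) * (((b-j).choose (m-j)) : ℤ) := by
          intro j hj
          have hjm : j ≤ m := Nat.lt_succ_iff.mp (Finset.mem_range.mp hj)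
          have e1 : b + 1 - j = (b - j) + 1 := by omega
          have e2 : m + 1 - j = (m - j) + 1 := by omega
          have e3 : b + 1 + 1 + d = b + 1 + (d + 1) := by ring
          rw [e1, e2, e3, Nat.choose_succ_succ]
          push_cast
          ring
        rw [Finset.sum_congr rfl split, Finset.sum_sub_distrib]
        rw [Finset.sum_range_succ] at H1
        simp only [Nat.sub_self, Nat.choose_self, pow_zero, Nat.choose_zero_right] at H1 ⊢
        -- H1 : ∑_{range (m+1)} term + C(b+1+(d+1), m+1) = C(d+1+(m+1), m+1)
        have H2' : ∑ j ∈ Finset.range (m+1),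
            (-1:ℤ)^(m-j) * ((b+1+(d+1)).choose j : ℤ) * (((b-j).choose (m-j)) : ℤ)
            = ((d+1+m).choose m : ℤ) := H2
        have pasN : (d+1+(m+1)).choose (m+1) = (d+1+m).choose m + (d+(m+1)).choose (m+1) := by
          rw [show d+1+(m+1) = (d+1+m)+1 from by omega, Nat.choose_succ_succ,
            show d+1+m = d+(m+1) from by omega]
        have pas : ((d+1+(m+1)).choose (m+1) : ℤ) = ((d+(m+1)).choose (m+1) : ℤ) + ((d+1+m).choose m : ℤ) := by
          push_cast [pasN]; ring
        have e3 : b + 1 + 1 + d = b + 1 + (d + 1) := by ring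
        rw [e3]
        linarith [H1, H2', pas]
      · -- m = b : alternating sum case
        have hb : m = b := by omega
        subst hb
        have : ∀ j ∈ Finset.range (m+1+1),
            (-1:ℤ)^(m+1-j) * ((m+1+1+d).choose j : ℤ) * (((m+1-j).choose (m+1-j)) : ℤ)
            = (-1:ℤ)^(m+1-j) * (((m+1+d)+1).choose j : ℤ) := by
          intro j hj
          rw [Nat.choose_self]
          have : m+1+1+d = (m+1+d)+1 := by ring
          rw [this]
          ring
        rw [Finset.sum_congr rfl this, altsum (m+1+d) (m+1),
          show m+1+d = d+(m+1) from by omega]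

theorem coefficient_extraction_binomial (n k i : ℕ) (hn : 1 ≤ n) (hk : n < k)
    (hi : i ≤ n - 1) :
    (∑ j ∈ Finset.range (i + 1),
        (-1 : ℤ) ^ (i - j) * ((k - 1).choose j : ℤ) * ((n - 1 - j).choose (i - j) : ℤ)) =
      ((k - n + i - 1).choose (k - n - 1) : ℤ) := by
  have hb : k - 1 = (n-1) + 1 + (k - n - 1) := by omega
  have := key (n-1) (k-n-1) i hi
  rw [hb, this, show k - n + i - 1 = (k-n-1)+i from by omega]
  have h2 := Nat.choose_symm (Nat.le_add_left i (k-n-1))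
  rw [show (k-n-1)+i - i = k-n-1 from by omega] at h2
  rw [← h2]
end
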